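/- Let α > 1, 1 < δ ≤ 2 and a > 1/(δ−1), and let f_Z:[0,1)→ℝ be the density of the power logarithmic linked exposure example, f_Z(z) = ((a+1)/α) · (1 − z/α)^{δ−2} / (a + (1 − z/α)^δ)² · ( a(δ−1) − (1 − z/α)^δ ). Then its derivative f_Z'(z) = −((a+1)/α²) · [ a²(δ−1)(δ−2) − a(δ−1)(δ+4)(1 − z/α)^δ + 2(1 − z/α)^{2δ} ] / ( (a + (1 − z/α)^δ)³ (1 − z/α)^{3−δ} ) has no zero in (0,1); in particular the density f_Z has no interior critical point on [0,1) and hence cannot be unimodal, so unimodality of the power logarithmic linked exposure density requires δ > 2. -/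

import Mathlib

/-- For `α > 1`, `1 < δ ≤ 2` and `a > 1/(δ-1)`, the density of the power
logarithmic linked exposure example,
`f_Z z = ((a+1)/α) (1-z/α)^(δ-2)/(a+(1-z/α)^δ)² (a(δ-1) - (1-z/α)^δ)`,
has derivative
`f_Z' z = -((a+1)/α²)(a²(δ-1)(δ-2) - a(δ-1)(δ+4)(1-z/α)^δ + 2(1-z/α)^(2δ)) / ((a+(1-z/α)^δ)³ (1-z/α)^(3-δ))`,
which has no zero in `(0,1)`; in particular the density has no interior critical point
on `[0,1)` (hence cannot be unimodal, so unimodality requires `δ > 2`). -/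
theorem statement15 (α δ a : ℝ) (hα : 1 < α) (hδ1 : 1 < δ) (hδ2 : δ ≤ 2)
    (ha : 1 / (δ - 1) < a) :
    let f : ℝ → ℝ := fun z =>
      (a + 1) / α * ((1 - z / α) ^ (δ - 2) / (a + (1 - z / α) ^ δ) ^ 2) *
        (a * (δ - 1) - (1 - z / α) ^ δ)
    let fd : ℝ → ℝ := fun z =>
      -((a + 1) / α ^ 2) *
        ((a ^ 2 * (δ - 1) * (δ - 2) - a * (δ - 1) * (δ + 4) * (1 - z / α) ^ δ +
            2 * (1 - z / α) ^ (2 * δ)) /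
          ((a + (1 - z / α) ^ δ) ^ 3 * (1 - z / α) ^ (3 - δ)))
    (∀ z ∈ Set.Ioo (0:ℝ) 1, HasDerivAt f (fd z) z ∧ fd z ≠ 0) ∧
    (∀ z ∈ Set.Ioo (0:ℝ) 1, ¬ HasDerivAt f 0 z) := by
  intro f fd
  have hα0 : (0:ℝ) < α := lt_trans one_pos hα
  have hδ0 : (0:ℝ) < δ - 1 := by linarith
  have ha0 : (0:ℝ) < a := lt_trans (by positivity) ha
  have haδ : 1 < a * (δ - 1) := by
    rw [div_lt_iff₀ hδ0] at ha; linarith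
  have key : ∀ z ∈ Set.Ioo (0:ℝ) 1, HasDerivAt f (fd z) z ∧ fd z ≠ 0 := by
    intro z hz
    obtain ⟨hz0, hz1⟩ := hz
    set u : ℝ := 1 - z / α with hu_def
    have hu0 : 0 < u := by
      have : z / α < 1 := (div_lt_one hα0).mpr (hz1.trans hα)
      simp only [hu_def]; linarith
    have hu1 : u < 1 := by
      have : 0 < z / α := div_pos hz0 hα0
      simp only [hu_def]; linarith
    set S : ℝ := u ^ δ with hS_def
    have hS0 : 0 < S := Real.rpow_pos_of_pos hu0 δ
    have hS1 : S < 1 := Real.rpow_lt_one hu0.le hu1 (by linarith)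
    have hden : 0 < a + S := by linarith
    -- rpow identities
    have n2 : u ^ ((2:ℝ)) = u ^ (2:ℕ) := by
      rw [show (2:ℝ) = ((2:ℕ):ℝ) by norm_num, Real.rpow_natCast]
    have n3 : u ^ ((3:ℝ)) = u ^ (3:ℕ) := by
      rw [show (3:ℝ) = ((3:ℕ):ℝ) by norm_num, Real.rpow_natCast]
    have e1 : u ^ (δ - 2) = S / u ^ 2 := by
      rw [hS_def, Real.rpow_sub hu0, n2]
    have e2 : u ^ (δ - 2 - 1) = S / u ^ 3 := by
      rw [show δ - 2 - 1 = δ - 3 by ring, hS_def, Real.rpow_sub hu0, n3]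
    have e3 : u ^ (δ - 1) = S / u := by
      rw [hS_def, Real.rpow_sub hu0, Real.rpow_one]
    have e4 : u ^ (3 - δ) = u ^ 3 / S := by
      rw [hS_def, Real.rpow_sub hu0, n3]
    have e5 : u ^ (2 * δ) = S * S := by
      rw [show 2 * δ = δ + δ by ring, Real.rpow_add hu0, hS_def]
    -- derivatives
    have hid : HasDerivAt (fun z : ℝ => 1 - z / α) (-(1/α)) z := by
      simpa using ((hasDerivAt_id z).div_const α).const_sub 1
    have hp : HasDerivAt (fun z : ℝ => (1 - z / α) ^ (δ - 2))
        ((δ - 2) * u ^ (δ - 2 - 1) * (-(1/α))) z := by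
      have := (Real.hasDerivAt_rpow_const (p := δ - 2) (Or.inl hu0.ne')).comp z hid
      simpa [Function.comp_def] using this
    have hq : HasDerivAt (fun z : ℝ => (1 - z / α) ^ δ)
        (δ * u ^ (δ - 1) * (-(1/α))) z := by
      have := (Real.hasDerivAt_rpow_const (p := δ) (Or.inl hu0.ne')).comp z hid
      simpa [Function.comp_def] using this
    have hden2 : HasDerivAt (fun z : ℝ => (a + (1 - z / α) ^ δ) ^ 2)
        (2 * (a + S) ^ 1 * (δ * u ^ (δ - 1) * (-(1/α)))) z := by
      simpa using (hq.const_add a).fun_pow 2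
    have hdiv := hp.fun_div hden2 (by positivity)
    have hsub := hq.const_sub (a * (δ - 1))
    have hmul := (hdiv.const_mul ((a + 1) / α)).mul hsub
    constructor
    · refine hmul.congr_deriv ?_
      show _ = fd z
      simp only [fd]
      rw [← hu_def, ← hS_def, e1, e2, e3, e4, e5]
      field_simp
      ring
    · simp only [fd]
      rw [← hu_def, ← hS_def, e4, e5]
      apply mul_ne_zero
      · have : (0:ℝ) < (a + 1) / α ^ 2 := by positivity
        simpa using this.ne'
      · apply div_ne_zero
        · have hT1 : a ^ 2 * (δ - 1) * (δ - 2) ≤ 0 :=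
            mul_nonpos_of_nonneg_of_nonpos (by positivity) (by linarith)
          have hT2 : 0 < S * (a * (δ - 1) * (δ + 4) - 2 * S) :=
            mul_pos hS0 (by nlinarith)
          nlinarith [hT1, hT2]
        · positivity
  refine ⟨key, fun z hz h0 => ?_⟩
  obtain ⟨hd, hne⟩ := key z hz
  exact hne (h0.unique hd).symm
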